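/- Let n ≥ 1, let μ be a nonzero finite Borel measure on ℝ^{n+1} with compact support, and fix t₀ > 0. Then the function x₀ ↦ F_{x₀,t₀}(μ) attains its supremum over ℝ^{n+1}, and every point x̃₀ ∈ ℝ^{n+1} at which this supremum is attained lies in the closed convex hull of the support of μ. -/

import Mathlib

open MeasureTheory Metric Set Filter Topology


set_option linter.unusedSectionVars false

variable {E : Type*} [NormedAddCommGroup E] [InnerProductSpace ℝ E]
  [MeasurableSpace E] [OpensMeasurableSpace E]

section helpers

variable (μ : Measure E) [IsFiniteMeasure μ] (t₀ : ℝ)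

lemma cont_integrand (x₀ : E) :
    Continuous fun x : E => Real.exp (-‖x - x₀‖ ^ 2 / (4 * t₀)) := by
  fun_prop

lemma cont_integrand' (x : E) :
    Continuous fun x₀ : E => Real.exp (-‖x - x₀‖ ^ 2 / (4 * t₀)) := by
  fun_prop

lemma exp_le_one' (ht₀ : 0 < t₀) (x x₀ : E) :
    Real.exp (-‖x - x₀‖ ^ 2 / (4 * t₀)) ≤ 1 :=
  Real.exp_le_one_iff.2 (by rw [neg_div]; exact neg_nonpos.2 (by positivity))

lemma integ (x₀ : E) (ht₀ : 0 < t₀) :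
    Integrable (fun x : E => Real.exp (-‖x - x₀‖ ^ 2 / (4 * t₀))) μ := by
  refine (integrable_const (1 : ℝ)).mono'
    ((cont_integrand t₀ x₀).aestronglyMeasurable) (Filter.Eventually.of_forall fun x => ?_)
  rw [Real.norm_eq_abs, abs_of_pos (Real.exp_pos _)]
  exact exp_le_one' t₀ ht₀ x x₀

lemma Ipos (ht₀ : 0 < t₀) (hμ : μ ≠ 0) (x₀ : E) :
    0 < ∫ x, Real.exp (-‖x - x₀‖ ^ 2 / (4 * t₀)) ∂μ := by
  rw [integral_pos_iff_support_of_nonneg_ae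
    (Filter.Eventually.of_forall fun x => (Real.exp_pos _).le) (integ μ t₀ x₀ ht₀)]
  have : (Function.support fun x : E => Real.exp (-‖x - x₀‖ ^ 2 / (4 * t₀))) = Set.univ := by
    ext x; simp [Function.mem_support, (Real.exp_pos _).ne']
  rw [this]
  exact MeasureTheory.Measure.measure_univ_pos.2 hμ

lemma Icont (ht₀ : 0 < t₀) :
    Continuous fun x₀ : E => ∫ x, Real.exp (-‖x - x₀‖ ^ 2 / (4 * t₀)) ∂μ := by
  refine continuous_of_dominated (fun x₀ => (cont_integrand t₀ x₀).aestronglyMeasurable)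
    (fun x₀ => Filter.Eventually.of_forall fun x => ?_) (integrable_const 1)
    (Filter.Eventually.of_forall fun x => cont_integrand' t₀ x)
  rw [Real.norm_eq_abs, abs_of_pos (Real.exp_pos _)]
  exact exp_le_one' t₀ ht₀ x x₀

end helpers

section decay

variable (μ : Measure E) [IsFiniteMeasure μ] (t₀ : ℝ) [ProperSpace E]

lemma Itendsto (ht₀ : 0 < t₀) {K : Set E} (hK : IsCompact K) (hK0 : μ Kᶜ = 0) :
    Tendsto (fun x₀ : E => ∫ x, Real.exp (-‖x - x₀‖ ^ 2 / (4 * t₀)) ∂μ)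
      (cocompact E) (𝓝 0) := by
  obtain ⟨R, hR⟩ := hK.isBounded.subset_closedBall 0
  have hR0 : (0:ℝ) ≤ max R 0 := le_max_right _ _
  set R' := max R 0 with hR'
  have hKR : K ⊆ closedBall 0 R' := hR.trans (closedBall_subset_closedBall (le_max_left _ _))
  have hexp : Tendsto (fun x₀ : E => Real.exp (-(‖x₀‖ - R') ^ 2 / (4 * t₀)))
      (cocompact E) (𝓝 0) := by
    apply Real.tendsto_exp_atBot.comp
    have h1 : Tendsto (fun t : ℝ => -(t - R') ^ 2 / (4 * t₀)) atTop atBot := by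
      apply Tendsto.atBot_div_const (by positivity)
      apply tendsto_neg_atBot_iff.2
      exact (tendsto_pow_atTop (two_ne_zero)).comp (tendsto_atTop_add_const_right _ _ tendsto_id)
    exact h1.comp tendsto_norm_cocompact_atTop
  have hbig : Tendsto (fun x₀ : E =>
      (μ Set.univ).toReal * Real.exp (-(‖x₀‖ - R') ^ 2 / (4 * t₀))) (cocompact E) (𝓝 0) := by
    simpa using hexp.const_mul (μ Set.univ).toReal
  refine squeeze_zero'
    (Filter.Eventually.of_forall fun x₀ => integral_nonneg fun x => (Real.exp_pos _).le) ?_ hbig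
  filter_upwards [tendsto_norm_cocompact_atTop.eventually (eventually_ge_atTop R')] with x₀ hx₀
  have hmem : ∀ᵐ y ∂μ, y ∈ K := mem_ae_iff.2 hK0
  calc ∫ x, Real.exp (-‖x - x₀‖ ^ 2 / (4 * t₀)) ∂μ
      ≤ ∫ _, Real.exp (-(‖x₀‖ - R') ^ 2 / (4 * t₀)) ∂μ := by
        refine integral_mono_ae (integ μ t₀ x₀ ht₀) (integrable_const _) ?_
        filter_upwards [hmem] with y hy
        have hyn : ‖y‖ ≤ R' := by simpa using hKR hy
        have h1 : ‖x₀‖ - R' ≤ ‖y - x₀‖ := by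
          have := norm_sub_norm_le x₀ y
          rw [norm_sub_rev y x₀]; linarith
        have h2 : (‖x₀‖ - R') ^ 2 ≤ ‖y - x₀‖ ^ 2 :=
          pow_le_pow_left₀ (by linarith) h1 2
        exact Real.exp_le_exp.2 (by rw [neg_div, neg_div, neg_le_neg_iff]; gcongr)
    _ = (μ Set.univ).toReal * Real.exp (-(‖x₀‖ - R') ^ 2 / (4 * t₀)) := by
        rw [integral_const, smul_eq_mul]; rfl

end decay

section support

variable (μ : Measure E) [IsFiniteMeasure μ] [SecondCountableTopology E]

lemma supp_compl_null :
    μ {x : E | ∀ r : ℝ, 0 < r → 0 < μ (ball x r)}ᶜ = 0 := by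
  apply measure_null_of_locally_null
  intro x hx
  simp only [Set.mem_compl_iff, Set.mem_setOf_eq, not_forall] at hx
  obtain ⟨r, hr, hμr⟩ := hx
  exact ⟨ball x r, mem_nhdsWithin_of_mem_nhds (ball_mem_nhds x hr),
    le_antisymm (not_lt.1 hμr) zero_le⟩

lemma supp_nonempty (hμ : μ ≠ 0) :
    ({x : E | ∀ r : ℝ, 0 < r → 0 < μ (ball x r)} : Set E).Nonempty := by
  by_contra h
  rw [Set.not_nonempty_iff_eq_empty] at h
  apply hμ
  have : μ Set.univ = 0 := by
    have := supp_compl_null μ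
    rwa [h, Set.compl_empty] at this
  exact Measure.measure_univ_eq_zero.1 this

lemma improve [CompleteSpace E] (t₀ : ℝ) (ht₀ : 0 < t₀) (hμ : μ ≠ 0) {x₀ : E}
    (h : x₀ ∉ closure (convexHull ℝ {x : E | ∀ r : ℝ, 0 < r → 0 < μ (ball x r)})) :
    ∃ x₀' : E, ∫ x, Real.exp (-‖x - x₀‖ ^ 2 / (4 * t₀)) ∂μ
      < ∫ x, Real.exp (-‖x - x₀'‖ ^ 2 / (4 * t₀)) ∂μ := by
  set S := {x : E | ∀ r : ℝ, 0 < r → 0 < μ (ball x r)} with hSdef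
  obtain ⟨f, u, hfx, hfy⟩ :=
    geometric_hahn_banach_point_closed ((convex_convexHull ℝ S).closure) isClosed_closure h
  set v := (InnerProductSpace.toDual ℝ E).symm f with hvdef
  have hv : ∀ y : E, (inner ℝ v y : ℝ) = f y := fun y => InnerProductSpace.toDual_symm_apply
  set c := u - f x₀ with hcdef
  have hc : 0 < c := sub_pos.2 hfx
  have hkey : ∀ y ∈ S, c ≤ (inner ℝ v (y - x₀) : ℝ) := by
    intro y hy
    have : u < f y := hfy y (subset_closure (subset_convexHull ℝ S hy))
    rw [inner_sub_right, hv, hv]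
    simp only [hcdef]
    linarith
  obtain ⟨y₀, hy₀⟩ := supp_nonempty μ hμ
  have hvne : v ≠ 0 := by
    intro hv0
    have := hkey y₀ hy₀
    rw [hv0] at this
    simp only [inner_zero_left] at this
    linarith
  have hnv : (0:ℝ) < ‖v‖ := norm_pos_iff.2 hvne
  set ε := c / ‖v‖ ^ 2 with hεdef
  have hε : 0 < ε := by positivity
  set δ := c ^ 2 / ‖v‖ ^ 2 with hδdef
  have hδ : 0 < δ := by positivity
  set x₀' := x₀ + ε • v with hx₀'def
  have hdist : ∀ y ∈ S, ‖y - x₀'‖ ^ 2 ≤ ‖y - x₀‖ ^ 2 - δ := by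
    intro y hy
    have h1 : y - x₀' = (y - x₀) - ε • v := by rw [hx₀'def]; abel
    rw [h1, @norm_sub_sq_real]
    have h2 : (inner ℝ (y - x₀) (ε • v) : ℝ) = ε * (inner ℝ v (y - x₀) : ℝ) := by
      rw [real_inner_smul_right, real_inner_comm]
    have h3 : ‖ε • v‖ ^ 2 = ε ^ 2 * ‖v‖ ^ 2 := by
      rw [norm_smul, mul_pow, Real.norm_eq_abs, sq_abs]
    rw [h2, h3]
    have h4 := hkey y hy
    have h5 : ε * c ≤ ε * (inner ℝ v (y - x₀) : ℝ) := by nlinarith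
    have h6 : ε * c = δ := by
      rw [hεdef, hδdef]; field_simp
    have h7 : ε ^ 2 * ‖v‖ ^ 2 = δ := by
      rw [hεdef, hδdef]; field_simp
    nlinarith
  refine ⟨x₀', ?_⟩
  have hae : ∀ᵐ y ∂μ, Real.exp (δ / (4 * t₀)) * Real.exp (-‖y - x₀‖ ^ 2 / (4 * t₀))
      ≤ Real.exp (-‖y - x₀'‖ ^ 2 / (4 * t₀)) := by
    filter_upwards [mem_ae_iff.2 (supp_compl_null μ)] with y hy
    rw [← Real.exp_add, Real.exp_le_exp]
    have := hdist y hy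
    rw [← add_div, div_le_div_iff₀ (by positivity) (by positivity)]
    nlinarith
  have hId : 0 < ∫ x, Real.exp (-‖x - x₀‖ ^ 2 / (4 * t₀)) ∂μ := Ipos μ t₀ ht₀ hμ x₀
  have hone : 1 < Real.exp (δ / (4 * t₀)) := by
    exact Real.one_lt_exp_iff.2 (by positivity)
  have hint : Real.exp (δ / (4 * t₀)) * ∫ x, Real.exp (-‖x - x₀‖ ^ 2 / (4 * t₀)) ∂μ
      ≤ ∫ x, Real.exp (-‖x - x₀'‖ ^ 2 / (4 * t₀)) ∂μ := by
    rw [← integral_const_mul]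
    exact integral_mono_ae ((integ μ t₀ x₀ ht₀).const_mul _) (integ μ t₀ x₀' ht₀) hae
  nlinarith
end support

/-- The F-functional `F_{x₀,t₀}(μ) = (4π t₀)^{-n/2} ∫ exp(-‖x-x₀‖²/(4t₀)) dμ(x)`. -/
noncomputable def Ffn (n : ℕ) (μ : Measure (EuclideanSpace ℝ (Fin (n + 1))))
    (x₀ : EuclideanSpace ℝ (Fin (n + 1))) (t₀ : ℝ) : ℝ :=
  (4 * Real.pi * t₀) ^ (-(n : ℝ) / 2) *
    ∫ x, Real.exp (-‖x - x₀‖ ^ 2 / (4 * t₀)) ∂μ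

/-- The support of a measure on a metric space: points all of whose neighbourhoods have
positive measure. -/
def measureSupport {n : ℕ} (μ : Measure (EuclideanSpace ℝ (Fin (n + 1)))) :
    Set (EuclideanSpace ℝ (Fin (n + 1))) :=
  {x | ∀ r : ℝ, 0 < r → 0 < μ (ball x r)}

set_option maxHeartbeats 1000000 in
theorem stmt_0 (n : ℕ) (hn : 1 ≤ n) (μ : Measure (EuclideanSpace ℝ (Fin (n + 1))))
    [IsFiniteMeasure μ] (hμ : μ ≠ 0)
    (hcpt : ∃ K : Set (EuclideanSpace ℝ (Fin (n + 1))), IsCompact K ∧ μ Kᶜ = 0)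
    (t₀ : ℝ) (ht₀ : 0 < t₀) :
    (∃ x₀ : EuclideanSpace ℝ (Fin (n + 1)), ∀ x : EuclideanSpace ℝ (Fin (n + 1)),
        Ffn n μ x t₀ ≤ Ffn n μ x₀ t₀) ∧
      ∀ x₀ : EuclideanSpace ℝ (Fin (n + 1)),
        (∀ x : EuclideanSpace ℝ (Fin (n + 1)), Ffn n μ x t₀ ≤ Ffn n μ x₀ t₀) →
          x₀ ∈ closure (convexHull ℝ (measureSupport μ)) := by
  obtain ⟨K, hK, hK0⟩ := hcpt
  set E := EuclideanSpace ℝ (Fin (n + 1))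
  have hπ : (0:ℝ) < Real.pi := Real.pi_pos
  have hcpos : (0:ℝ) < (4 * Real.pi * t₀) ^ (-(n : ℝ) / 2) :=
    Real.rpow_pos_of_pos (by positivity) _
  have hFfn : ∀ x₀ : E, Ffn n μ x₀ t₀ = (4 * Real.pi * t₀) ^ (-(n : ℝ) / 2) *
      ∫ x, Real.exp (-‖x - x₀‖ ^ 2 / (4 * t₀)) ∂μ := fun _ => rfl
  constructor
  · have hcont : Continuous fun x₀ : E => Ffn n μ x₀ t₀ := by
      simp only [hFfn]
      exact continuous_const.mul (Icont μ t₀ ht₀)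
    apply hcont.exists_forall_ge' (0 : E)
    have hev : ∀ᶠ x₀ in cocompact E,
        (∫ x, Real.exp (-‖x - x₀‖ ^ 2 / (4 * t₀)) ∂μ)
          < ∫ x, Real.exp (-‖x - (0:E)‖ ^ 2 / (4 * t₀)) ∂μ :=
      (Itendsto μ t₀ ht₀ hK hK0).eventually (gt_mem_nhds (Ipos μ t₀ ht₀ hμ 0))
    filter_upwards [hev] with x₀ hx₀
    rw [hFfn, hFfn]
    exact mul_le_mul_of_nonneg_left hx₀.le hcpos.le
  · intro x₀ hmax
    by_contra h
    obtain ⟨x₀', hx₀'⟩ := improve μ t₀ ht₀ hμ h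
    have := hmax x₀'
    rw [hFfn, hFfn] at this
    nlinarith
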